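/- arXiv:1806.09795 — 6 statements merged into one kernel-verified Lean document; each statement's English description precedes it below -/
import Mathlib

section
/- In a two-player finite discounted stochastic game, an observed bi-policy π is a utilitarian cooperative strategy (uCS) — i.e., for every state s, π(s) maximizes Q_1^π(s,·) + Q_2^π(s,·) over all pure joint actions — if and only if (B_π − B_a) D_π (r_1 + r_2) ≥ 0 componentwise for every pure joint action a, where D_π = I + γ P (I − γ G_π)^{-1} B_π and B_a is the operator induced by the stationary bi-policy that plays the pure joint action a in every state. -/
open Matrix BigOperators

/-- In a two-player finite discounted stochastic game, an
observed bi-policy `π` is a utilitarian cooperative strategy (uCS) — i.e., for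
every state `s`, `π(s)` maximizes `Q_1^π(s,·) + Q_2^π(s,·)` over all pure joint
actions — if and only if `(B_π − B_a) D_π (r_1 + r_2) ≥ 0` componentwise for
every pure joint action `a`, where `D_π = I + γ P (I − γ G_π)⁻¹ B_π` and `B_a`
corresponds to the stationary bi-policy playing `a` in every state. -/
theorem stmt3 {S A1 A2 : Type*} [Fintype S] [Fintype A1] [Fintype A2]
    [DecidableEq S] [DecidableEq A1] [DecidableEq A2]
    (γ : ℝ) (hγ0 : 0 ≤ γ) (hγ1 : γ < 1)
    (p : S × A1 × A2 → S → ℝ)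
    (hp0 : ∀ sa s', 0 ≤ p sa s') (hp1 : ∀ sa, ∑ s', p sa s' = 1)
    (π1 : S → A1 → ℝ) (π2 : S → A2 → ℝ)
    (hπ10 : ∀ s a, 0 ≤ π1 s a) (hπ11 : ∀ s, ∑ a, π1 s a = 1)
    (hπ20 : ∀ s a, 0 ≤ π2 s a) (hπ21 : ∀ s, ∑ a, π2 s a = 1)
    (r1 r2 : S × A1 × A2 → ℝ)
    (Gπ : Matrix S S ℝ)
    (hG : Gπ = Matrix.of fun s s' => ∑ a1, ∑ a2, π1 s a1 * π2 s a2 * p (s, a1, a2) s')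
    (Bπ : Matrix S (S × A1 × A2) ℝ)
    (hB : Bπ = Matrix.of fun s x => if x.1 = s then π1 s x.2.1 * π2 s x.2.2 else 0)
    (Ba : A1 × A2 → Matrix S (S × A1 × A2) ℝ)
    (hBa : ∀ a, Ba a = Matrix.of fun s x => if x = (s, a.1, a.2) then 1 else 0)
    (P : Matrix (S × A1 × A2) S ℝ)
    (hP : P = Matrix.of fun sa s' => p sa s')
    (V1 V2 : S → ℝ)
    (hV1 : V1 = (1 - γ • Gπ)⁻¹ *ᵥ (Bπ *ᵥ r1))
    (hV2 : V2 = (1 - γ • Gπ)⁻¹ *ᵥ (Bπ *ᵥ r2))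
    (Q1 Q2 : S × A1 × A2 → ℝ)
    (hQ1 : ∀ sa, Q1 sa = r1 sa + γ * ∑ s', p sa s' * V1 s')
    (hQ2 : ∀ sa, Q2 sa = r2 sa + γ * ∑ s', p sa s' * V2 s')
    (Dπ : Matrix (S × A1 × A2) (S × A1 × A2) ℝ)
    (hD : Dπ = 1 + γ • (P * (1 - γ • Gπ)⁻¹ * Bπ)) :
    (∀ s : S, ∀ a : A1 × A2,
        Q1 (s, a.1, a.2) + Q2 (s, a.1, a.2) ≤
          ∑ b1, ∑ b2, π1 s b1 * π2 s b2 * (Q1 (s, b1, b2) + Q2 (s, b1, b2)))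
      ↔
    (∀ a : A1 × A2, ∀ s : S,
        0 ≤ (((Bπ - Ba a) * Dπ) *ᵥ (fun sa => r1 sa + r2 sa)) s) := by

  have hDr : Dπ *ᵥ (fun sa => r1 sa + r2 sa) = fun sa => Q1 sa + Q2 sa := by
    have hr : (fun sa => r1 sa + r2 sa) = r1 + r2 := rfl
    have hBr : Bπ *ᵥ (r1 + r2) = (Bπ *ᵥ r1) + (Bπ *ᵥ r2) := Matrix.mulVec_add Bπ r1 r2
    funext sa
    rw [hD, hr]
    simp only [Matrix.add_mulVec, Matrix.one_mulVec, Matrix.smul_mulVec,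
      ← Matrix.mulVec_mulVec, hBr, Matrix.mulVec_add, ← hV1, ← hV2]
    have hPV : ∀ v : S → ℝ, (P *ᵥ v) sa = ∑ s', p sa s' * v s' := by
      intro v; rw [hP]; simp [Matrix.mulVec, dotProduct]
    simp only [Pi.add_apply, Pi.smul_apply, hPV, smul_eq_mul]
    rw [hQ1, hQ2]
    try rw [show (V1 + V2 : S → ℝ) = fun s' => V1 s' + V2 s' from rfl]
    try simp only [mul_add, Finset.sum_add_distrib]
    try ring
  have key : ∀ (a : A1 × A2) (s : S),
      (((Bπ - Ba a) * Dπ) *ᵥ (fun sa => r1 sa + r2 sa)) s =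
        (∑ b1, ∑ b2, π1 s b1 * π2 s b2 * (Q1 (s, b1, b2) + Q2 (s, b1, b2)))
          - (Q1 (s, a.1, a.2) + Q2 (s, a.1, a.2)) := by
    intro a s
    rw [← Matrix.mulVec_mulVec, hDr, Matrix.sub_mulVec]
    have h1 : (Bπ *ᵥ fun sa => Q1 sa + Q2 sa) s
        = ∑ b1, ∑ b2, π1 s b1 * π2 s b2 * (Q1 (s, b1, b2) + Q2 (s, b1, b2)) := by
      rw [hB]
      simp [Matrix.mulVec, dotProduct, Fintype.sum_prod_type, Finset.sum_ite_eq',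
        ite_mul]
    have h2 : (Ba a *ᵥ fun sa => Q1 sa + Q2 sa) s = Q1 (s, a.1, a.2) + Q2 (s, a.1, a.2) := by
      rw [hBa]
      simp [Matrix.mulVec, dotProduct, ite_mul]
    simp [h1, h2]
  constructor
  · intro h a s
    rw [key a s]
    exact sub_nonneg.2 (h s a)
  · intro h s a
    have := h a s
    rw [key a s] at this
    linarith
end

section
/- In a two-player finite discounted stochastic game, a bi-policy π is a Nash equilibrium (no player can improve their value by unilaterally deviating at any state to any pure action while the opponent keeps playing π) if and only if (B_{π|a_1} − B_π) D_π r_1 ≤ 0 for all actions a_1 of player 1 and (B_{π|a_2} − B_π) D_π r_2 ≤ 0 for all actions a_2 of player 2, where B_{π|a_i} is induced by the bi-policy in which player i plays the pure action a_i in every state and the other player plays their component of π. -/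
open Matrix BigOperators

lemma stmt4_inv_aux {S : Type*} [Fintype S] [DecidableEq S]
    (γ : ℝ) (hγ0 : 0 ≤ γ) (hγ1 : γ < 1) (G : Matrix S S ℝ)
    (hGnn : ∀ s s', 0 ≤ G s s') (hGrow : ∀ s, ∑ s', G s s' = 1) :
    IsUnit (1 - γ • G).det := by
  rw [isUnit_iff_ne_zero]
  intro hdet
  obtain ⟨v, hv0, hv⟩ := Matrix.exists_mulVec_eq_zero_iff.2 hdet
  have hne : (Finset.univ : Finset S).Nonempty := by
    by_contra h
    apply hv0
    funext s
    exact absurd (Finset.mem_univ s) (fun hs => h ⟨s, hs⟩)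
  obtain ⟨s₀, -, hmax⟩ := Finset.exists_max_image Finset.univ (fun s => |v s|) hne
  have hpos : 0 < |v s₀| := by
    rcases Function.ne_iff.1 hv0 with ⟨s, hs⟩
    have : 0 < |v s| := abs_pos.2 hs
    linarith [hmax s (Finset.mem_univ s)]
  have heq : v s₀ = γ * ∑ s', G s₀ s' * v s' := by
    have h := congrFun hv s₀
    rw [Matrix.sub_mulVec, Matrix.smul_mulVec] at h
    have h2 : v s₀ - γ * (G *ᵥ v) s₀ = 0 := by simpa [Matrix.one_mulVec] using h
    have : v s₀ = γ * (G *ᵥ v) s₀ := by linarith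
    simpa [Matrix.mulVec, dotProduct] using this
  have hle : |v s₀| ≤ γ * |v s₀| := by
    calc |v s₀| = γ * |∑ s', G s₀ s' * v s'| := by
          rw [heq, abs_mul, abs_of_nonneg hγ0]
      _ ≤ γ * ∑ s', G s₀ s' * |v s₀| := by
          apply mul_le_mul_of_nonneg_left _ hγ0
          refine (Finset.abs_sum_le_sum_abs _ _).trans ?_
          apply Finset.sum_le_sum
          intro s' _
          rw [abs_mul, abs_of_nonneg (hGnn s₀ s')]
          exact mul_le_mul_of_nonneg_left (hmax s' (Finset.mem_univ s')) (hGnn s₀ s')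
      _ = γ * |v s₀| := by rw [← Finset.sum_mul, hGrow, one_mul]
  nlinarith

/-- In a two-player finite discounted stochastic game, a
bi-policy `π` is a Nash equilibrium (no player can improve their value by
unilaterally deviating at any state to any pure action while the opponent keeps
playing `π`, i.e. `[Q_2^π(s)]ᵀ π_1(s) ≤ V_2^π(s)·1` and
`Q_1^π(s) π_2(s) ≤ V_1^π(s)·1` in every state) if and only if
`(B_{π|a_1} − B_π) D_π r_1 ≤ 0` for all `a_1 ∈ A_1` and
`(B_{π|a_2} − B_π) D_π r_2 ≤ 0` for all `a_2 ∈ A_2`. -/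
theorem stmt4 {S A1 A2 : Type*} [Fintype S] [Fintype A1] [Fintype A2]
    [DecidableEq S] [DecidableEq A1] [DecidableEq A2]
    (γ : ℝ) (hγ0 : 0 ≤ γ) (hγ1 : γ < 1)
    (p : S × A1 × A2 → S → ℝ)
    (hp0 : ∀ sa s', 0 ≤ p sa s') (hp1 : ∀ sa, ∑ s', p sa s' = 1)
    (π1 : S → A1 → ℝ) (π2 : S → A2 → ℝ)
    (hπ10 : ∀ s a, 0 ≤ π1 s a) (hπ11 : ∀ s, ∑ a, π1 s a = 1)
    (hπ20 : ∀ s a, 0 ≤ π2 s a) (hπ21 : ∀ s, ∑ a, π2 s a = 1)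
    (r1 r2 : S × A1 × A2 → ℝ)
    (Gπ : Matrix S S ℝ)
    (hG : Gπ = Matrix.of fun s s' => ∑ a1, ∑ a2, π1 s a1 * π2 s a2 * p (s, a1, a2) s')
    (Bπ : Matrix S (S × A1 × A2) ℝ)
    (hB : Bπ = Matrix.of fun s x => if x.1 = s then π1 s x.2.1 * π2 s x.2.2 else 0)
    (Bπa1 : A1 → Matrix S (S × A1 × A2) ℝ)
    (hBa1 : ∀ a1, Bπa1 a1 =
      Matrix.of fun s x => if x.1 = s ∧ x.2.1 = a1 then π2 s x.2.2 else 0)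
    (Bπa2 : A2 → Matrix S (S × A1 × A2) ℝ)
    (hBa2 : ∀ a2, Bπa2 a2 =
      Matrix.of fun s x => if x.1 = s ∧ x.2.2 = a2 then π1 s x.2.1 else 0)
    (P : Matrix (S × A1 × A2) S ℝ)
    (hP : P = Matrix.of fun sa s' => p sa s')
    (V1 V2 : S → ℝ)
    (hV1 : V1 = (1 - γ • Gπ)⁻¹ *ᵥ (Bπ *ᵥ r1))
    (hV2 : V2 = (1 - γ • Gπ)⁻¹ *ᵥ (Bπ *ᵥ r2))
    (Q1 Q2 : S × A1 × A2 → ℝ)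
    (hQ1 : ∀ sa, Q1 sa = r1 sa + γ * ∑ s', p sa s' * V1 s')
    (hQ2 : ∀ sa, Q2 sa = r2 sa + γ * ∑ s', p sa s' * V2 s')
    (Dπ : Matrix (S × A1 × A2) (S × A1 × A2) ℝ)
    (hD : Dπ = 1 + γ • (P * (1 - γ • Gπ)⁻¹ * Bπ)) :
    ((∀ s : S, ∀ a2 : A2, ∑ a1, π1 s a1 * Q2 (s, a1, a2) ≤ V2 s) ∧
     (∀ s : S, ∀ a1 : A1, ∑ a2, π2 s a2 * Q1 (s, a1, a2) ≤ V1 s))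
      ↔
    ((∀ a1 : A1, ∀ s : S, (((Bπa1 a1 - Bπ) * Dπ) *ᵥ r1) s ≤ 0) ∧
     (∀ a2 : A2, ∀ s : S, (((Bπa2 a2 - Bπ) * Dπ) *ᵥ r2) s ≤ 0)) := by
  -- basic properties of Gπ
  have hGnn : ∀ s s', 0 ≤ Gπ s s' := by
    intro s s'
    rw [hG]
    exact Finset.sum_nonneg fun a1 _ => Finset.sum_nonneg fun a2 _ =>
      mul_nonneg (mul_nonneg (hπ10 s a1) (hπ20 s a2)) (hp0 _ _)
  have hGrow : ∀ s, ∑ s', Gπ s s' = 1 := by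
    intro s
    rw [hG]
    simp only [Matrix.of_apply]
    rw [Finset.sum_comm]
    have : ∀ a1 ∈ Finset.univ, ∑ s', ∑ a2, π1 s a1 * π2 s a2 * p (s, a1, a2) s'
        = π1 s a1 := by
      intro a1 _
      rw [Finset.sum_comm]
      have : ∀ a2 ∈ Finset.univ, ∑ s', π1 s a1 * π2 s a2 * p (s, a1, a2) s'
          = π1 s a1 * π2 s a2 := by
        intro a2 _
        rw [← Finset.mul_sum, hp1, mul_one]
      rw [Finset.sum_congr rfl this, ← Finset.mul_sum, hπ21, mul_one]
    rw [Finset.sum_congr rfl this, hπ11]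
  have hUnit := stmt4_inv_aux γ hγ0 hγ1 Gπ hGnn hGrow
  have hMul : (1 - γ • Gπ) * (1 - γ • Gπ)⁻¹ = 1 := Matrix.mul_nonsing_inv _ hUnit
  -- Bπ * P = Gπ
  have hBP : Bπ * P = Gπ := by
    rw [hB, hP, hG]
    ext s s'
    simp [Matrix.mul_apply, Fintype.sum_prod_type, ite_mul, mul_assoc]
  -- D r = Q
  have key : ∀ (r : S × A1 × A2 → ℝ) (V : S → ℝ) (Q : S × A1 × A2 → ℝ),
      V = (1 - γ • Gπ)⁻¹ *ᵥ (Bπ *ᵥ r) →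
      (∀ sa, Q sa = r sa + γ * ∑ s', p sa s' * V s') →
      Dπ *ᵥ r = Q ∧ Bπ *ᵥ Q = V := by
    intro r V Q hV hQ
    have hQ' : Q = r + γ • (P *ᵥ V) := by
      funext sa
      rw [hQ]
      simp [hP, Matrix.mulVec, dotProduct]
    have hDr : Dπ *ᵥ r = Q := by
      rw [hD, hQ']
      rw [Matrix.add_mulVec, Matrix.one_mulVec, Matrix.smul_mulVec]
      congr 1
      rw [← Matrix.mulVec_mulVec, ← Matrix.mulVec_mulVec, ← hV]
    have hBV : V = Bπ *ᵥ r + γ • (Gπ *ᵥ V) := by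
      have h1 : (1 - γ • Gπ) *ᵥ V = Bπ *ᵥ r := by
        rw [hV, Matrix.mulVec_mulVec, hMul, Matrix.one_mulVec]
      rw [Matrix.sub_mulVec, Matrix.one_mulVec, Matrix.smul_mulVec,
        sub_eq_iff_eq_add] at h1
      exact h1
    have hBQ : Bπ *ᵥ Q = V := by
      rw [hQ', Matrix.mulVec_add, Matrix.mulVec_smul, Matrix.mulVec_mulVec, hBP]
      exact hBV.symm
    exact ⟨hDr, hBQ⟩
  obtain ⟨hDr1, hBQ1⟩ := key r1 V1 Q1 hV1 hQ1
  obtain ⟨hDr2, hBQ2⟩ := key r2 V2 Q2 hV2 hQ2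
  -- pointwise value of (Bπa1 a1 - Bπ) Dπ r1
  have hval1 : ∀ a1 s, (((Bπa1 a1 - Bπ) * Dπ) *ᵥ r1) s
      = (∑ a2, π2 s a2 * Q1 (s, a1, a2)) - V1 s := by
    intro a1 s
    rw [← Matrix.mulVec_mulVec, hDr1, Matrix.sub_mulVec]
    have h1 : ((Bπa1 a1) *ᵥ Q1) s = ∑ a2, π2 s a2 * Q1 (s, a1, a2) := by
      rw [hBa1]
      simp [Matrix.mulVec, dotProduct, Fintype.sum_prod_type, ite_and, ite_mul]
    have h2 : (Bπ *ᵥ Q1) s = V1 s := congrFun hBQ1 s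
    simp [h1, h2]
  have hval2 : ∀ a2 s, (((Bπa2 a2 - Bπ) * Dπ) *ᵥ r2) s
      = (∑ a1, π1 s a1 * Q2 (s, a1, a2)) - V2 s := by
    intro a2 s
    rw [← Matrix.mulVec_mulVec, hDr2, Matrix.sub_mulVec]
    have h1 : ((Bπa2 a2) *ᵥ Q2) s = ∑ a1, π1 s a1 * Q2 (s, a1, a2) := by
      rw [hBa2]
      simp [Matrix.mulVec, dotProduct, Fintype.sum_prod_type, ite_and, ite_mul]
    have h2 : (Bπ *ᵥ Q2) s = V2 s := congrFun hBQ2 s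
    simp [h1, h2]
  constructor
  · rintro ⟨h2, h1⟩
    exact ⟨fun a1 s => by rw [hval1]; linarith [h1 s a1],
           fun a2 s => by rw [hval2]; linarith [h2 s a2]⟩
  · rintro ⟨h1, h2⟩
    refine ⟨fun s a2 => ?_, fun s a1 => ?_⟩
    · have := h2 a2 s; rw [hval2] at this; linarith
    · have := h1 a1 s; rw [hval1] at this; linarith
end

section
/- In a two-player finite discounted stochastic game, a bi-policy π is an adversarial equilibrium (a Nash equilibrium in which, additionally, no player is hurt by any unilateral deviation of the opponent) if and only if the following four families of linear inequalities in the reward vectors hold: (B_{π|a_1} − B_π) D_π r_1 ≤ 0 for all a_1 ∈ A_1; (B_{π|a_2} − B_π) D_π r_2 ≤ 0 for all a_2 ∈ A_2; (B_{π|a_1} − B_π) D_π r_2 ≥ 0 for all a_1 ∈ A_1; and (B_{π|a_2} − B_π) D_π r_1 ≥ 0 for all a_2 ∈ A_2. -/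
open Matrix BigOperators

/-- In a two-player finite discounted stochastic game, a
bi-policy `π` is an adversarial equilibrium (a Nash equilibrium in which,
additionally, no player is hurt by any unilateral deviation of the opponent:
`[Q_2^π(s)]ᵀ π_1(s) ≤ V_2^π(s)·1`, `Q_1^π(s) π_2(s) ≤ V_1^π(s)·1`,
`[Q_1^π(s)]ᵀ π_1(s) ≥ V_1^π(s)·1`, `Q_2^π(s) π_2(s) ≥ V_2^π(s)·1`) if and only
if the four families of linear inequalities
`(B_{π|a_1} − B_π) D_π r_1 ≤ 0`, `(B_{π|a_2} − B_π) D_π r_2 ≤ 0`,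
`(B_{π|a_1} − B_π) D_π r_2 ≥ 0`, `(B_{π|a_2} − B_π) D_π r_1 ≥ 0` hold. -/
theorem stmt5 {S A1 A2 : Type*} [Fintype S] [Fintype A1] [Fintype A2]
    [DecidableEq S] [DecidableEq A1] [DecidableEq A2]
    (γ : ℝ) (hγ0 : 0 ≤ γ) (hγ1 : γ < 1)
    (p : S × A1 × A2 → S → ℝ)
    (hp0 : ∀ sa s', 0 ≤ p sa s') (hp1 : ∀ sa, ∑ s', p sa s' = 1)
    (π1 : S → A1 → ℝ) (π2 : S → A2 → ℝ)
    (hπ10 : ∀ s a, 0 ≤ π1 s a) (hπ11 : ∀ s, ∑ a, π1 s a = 1)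
    (hπ20 : ∀ s a, 0 ≤ π2 s a) (hπ21 : ∀ s, ∑ a, π2 s a = 1)
    (r1 r2 : S × A1 × A2 → ℝ)
    (Gπ : Matrix S S ℝ)
    (hG : Gπ = Matrix.of fun s s' => ∑ a1, ∑ a2, π1 s a1 * π2 s a2 * p (s, a1, a2) s')
    (Bπ : Matrix S (S × A1 × A2) ℝ)
    (hB : Bπ = Matrix.of fun s x => if x.1 = s then π1 s x.2.1 * π2 s x.2.2 else 0)
    (Bπa1 : A1 → Matrix S (S × A1 × A2) ℝ)
    (hBa1 : ∀ a1, Bπa1 a1 =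
      Matrix.of fun s x => if x.1 = s ∧ x.2.1 = a1 then π2 s x.2.2 else 0)
    (Bπa2 : A2 → Matrix S (S × A1 × A2) ℝ)
    (hBa2 : ∀ a2, Bπa2 a2 =
      Matrix.of fun s x => if x.1 = s ∧ x.2.2 = a2 then π1 s x.2.1 else 0)
    (P : Matrix (S × A1 × A2) S ℝ)
    (hP : P = Matrix.of fun sa s' => p sa s')
    (V1 V2 : S → ℝ)
    (hV1 : V1 = (1 - γ • Gπ)⁻¹ *ᵥ (Bπ *ᵥ r1))
    (hV2 : V2 = (1 - γ • Gπ)⁻¹ *ᵥ (Bπ *ᵥ r2))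
    (Q1 Q2 : S × A1 × A2 → ℝ)
    (hQ1 : ∀ sa, Q1 sa = r1 sa + γ * ∑ s', p sa s' * V1 s')
    (hQ2 : ∀ sa, Q2 sa = r2 sa + γ * ∑ s', p sa s' * V2 s')
    (Dπ : Matrix (S × A1 × A2) (S × A1 × A2) ℝ)
    (hD : Dπ = 1 + γ • (P * (1 - γ • Gπ)⁻¹ * Bπ)) :
    ((∀ s : S, ∀ a2 : A2, ∑ a1, π1 s a1 * Q2 (s, a1, a2) ≤ V2 s) ∧
     (∀ s : S, ∀ a1 : A1, ∑ a2, π2 s a2 * Q1 (s, a1, a2) ≤ V1 s) ∧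
     (∀ s : S, ∀ a2 : A2, V1 s ≤ ∑ a1, π1 s a1 * Q1 (s, a1, a2)) ∧
     (∀ s : S, ∀ a1 : A1, V2 s ≤ ∑ a2, π2 s a2 * Q2 (s, a1, a2)))
      ↔
    ((∀ a1 : A1, ∀ s : S, (((Bπa1 a1 - Bπ) * Dπ) *ᵥ r1) s ≤ 0) ∧
     (∀ a2 : A2, ∀ s : S, (((Bπa2 a2 - Bπ) * Dπ) *ᵥ r2) s ≤ 0) ∧
     (∀ a1 : A1, ∀ s : S, 0 ≤ (((Bπa1 a1 - Bπ) * Dπ) *ᵥ r2) s) ∧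
     (∀ a2 : A2, ∀ s : S, 0 ≤ (((Bπa2 a2 - Bπ) * Dπ) *ᵥ r1) s)) := by
  set M : Matrix S S ℝ := 1 - γ • Gπ with hM
  have hGnn : ∀ s s', 0 ≤ Gπ s s' := by
    intro s s'
    rw [hG]
    exact Finset.sum_nonneg fun a1 _ => Finset.sum_nonneg fun a2 _ =>
      mul_nonneg (mul_nonneg (hπ10 s a1) (hπ20 s a2)) (hp0 _ _)
  have hGrow : ∀ s, ∑ s', Gπ s s' = 1 := by
    intro s
    simp only [hG, Matrix.of_apply]
    calc ∑ s', ∑ a1, ∑ a2, π1 s a1 * π2 s a2 * p (s, a1, a2) s'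
        = ∑ a1, ∑ a2, ∑ s', π1 s a1 * π2 s a2 * p (s, a1, a2) s' := by
          rw [Finset.sum_comm]
          exact Finset.sum_congr rfl fun a1 _ => Finset.sum_comm
      _ = ∑ a1, ∑ a2, π1 s a1 * π2 s a2 := by
          simp [← Finset.mul_sum, hp1]
      _ = 1 := by
          simp [← Finset.mul_sum, hπ21, ← Finset.sum_mul, hπ11]
  have hdet : M.det ≠ 0 := by
    apply det_ne_zero_of_sum_row_lt_diag
    intro k
    have hGkk1 : Gπ k k ≤ 1 := by
      rw [← hGrow k]
      exact Finset.single_le_sum (fun j _ => hGnn k j) (Finset.mem_univ k)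
    have hMkk : M k k = 1 - γ * Gπ k k := by
      simp [hM, Matrix.one_apply, Matrix.sub_apply]
    have hsum : ∑ j ∈ Finset.univ.erase k, ‖M k j‖ = γ * (1 - Gπ k k) := by
      have hcong : ∀ j ∈ Finset.univ.erase k, ‖M k j‖ = γ * Gπ k j := by
        intro j hj
        have hjk : j ≠ k := Finset.ne_of_mem_erase hj
        have hMkj : M k j = -(γ * Gπ k j) := by
          simp [hM, Matrix.one_apply, (Ne.symm hjk), Matrix.sub_apply]
        rw [hMkj, norm_neg, Real.norm_of_nonneg (mul_nonneg hγ0 (hGnn k j))]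
      rw [Finset.sum_congr rfl hcong, ← Finset.mul_sum,
        Finset.sum_erase_eq_sub (Finset.mem_univ k), hGrow]
    rw [hsum, hMkk, Real.norm_of_nonneg (by nlinarith [hGnn k k])]
    nlinarith [hGnn k k]
  have hMM : M * M⁻¹ = 1 := Matrix.mul_nonsing_inv M (isUnit_iff_ne_zero.mpr hdet)
  have main : ∀ (r : S × A1 × A2 → ℝ) (V : S → ℝ) (Q : S × A1 × A2 → ℝ),
      V = M⁻¹ *ᵥ (Bπ *ᵥ r) → (∀ sa, Q sa = r sa + γ * ∑ s', p sa s' * V s') →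
      (∀ s a1, (((Bπa1 a1 - Bπ) * Dπ) *ᵥ r) s = (∑ a2, π2 s a2 * Q (s, a1, a2)) - V s)
      ∧ (∀ s a2, (((Bπa2 a2 - Bπ) * Dπ) *ᵥ r) s = (∑ a1, π1 s a1 * Q (s, a1, a2)) - V s) := by
    intro r V Q hV hQ
    have hMV : M *ᵥ V = Bπ *ᵥ r := by
      rw [hV, Matrix.mulVec_mulVec, hMM, Matrix.one_mulVec]
    have hDr : Dπ *ᵥ r = Q := by
      funext sa
      have h1 : (P * M⁻¹ * Bπ) *ᵥ r = P *ᵥ V := by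
        rw [hV, Matrix.mulVec_mulVec, Matrix.mulVec_mulVec, Matrix.mul_assoc]
      rw [hD, Matrix.add_mulVec, Matrix.one_mulVec, Matrix.smul_mulVec, h1, hQ]
      simp [Matrix.mulVec, dotProduct, hP]
    -- V s = ∑ a1 ∑ a2 π1 π2 r + γ * ∑ s' G V
    have hVeq : ∀ s, V s = (Bπ *ᵥ r) s + γ * (Gπ *ᵥ V) s := by
      intro s
      have h2 := congrFun hMV s
      simp only [hM, Matrix.sub_mulVec, Matrix.one_mulVec, Matrix.smul_mulVec,
        Pi.sub_apply, Pi.smul_apply, smul_eq_mul] at h2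
      linarith
    have hBQ : ∀ s, (Bπ *ᵥ Q) s = V s := by
      intro s
      have e1 : (Bπ *ᵥ Q) s = ∑ a1, ∑ a2, π1 s a1 * π2 s a2 * Q (s, a1, a2) := by
        simp only [Matrix.mulVec, dotProduct, hB, Matrix.of_apply,
          Fintype.sum_prod_type]
        rw [Finset.sum_eq_single s]
        · simp
        · intro b _ hb; simp [hb]
        · simp
      have e2 : (Gπ *ᵥ V) s = ∑ a1, ∑ a2, π1 s a1 * π2 s a2 * ∑ s', p (s, a1, a2) s' * V s' := by
        simp only [Matrix.mulVec, dotProduct, hG, Matrix.of_apply]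
        simp_rw [Finset.sum_mul, Finset.mul_sum]
        rw [Finset.sum_comm]
        refine Finset.sum_congr rfl fun a1 _ => ?_
        rw [Finset.sum_comm]
        exact Finset.sum_congr rfl fun a2 _ => Finset.sum_congr rfl fun s' _ => by ring
      have e3 : (Bπ *ᵥ r) s = ∑ a1, ∑ a2, π1 s a1 * π2 s a2 * r (s, a1, a2) := by
        simp only [Matrix.mulVec, dotProduct, hB, Matrix.of_apply,
          Fintype.sum_prod_type]
        rw [Finset.sum_eq_single s]
        · simp
        · intro b _ hb; simp [hb]
        · simp
      rw [e1, hVeq s, e2, e3]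
      simp_rw [Finset.mul_sum]
      rw [← Finset.sum_add_distrib]
      refine Finset.sum_congr rfl fun a1 _ => ?_
      rw [← Finset.sum_add_distrib]
      refine Finset.sum_congr rfl fun a2 _ => ?_
      rw [hQ]
      simp only [mul_add, Finset.mul_sum]
      congr 1
      exact Finset.sum_congr rfl fun s' _ => by ring
    have hBa1Q : ∀ s a1, ((Bπa1 a1) *ᵥ Q) s = ∑ a2, π2 s a2 * Q (s, a1, a2) := by
      intro s a1
      simp only [Matrix.mulVec, dotProduct, hBa1, Matrix.of_apply,
        Fintype.sum_prod_type]
      rw [Finset.sum_eq_single s]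
      · rw [Finset.sum_eq_single a1]
        · simp
        · intro b _ hb; simp [hb]
        · simp
      · intro b _ hb; simp [hb]
      · simp
    have hBa2Q : ∀ s a2, ((Bπa2 a2) *ᵥ Q) s = ∑ a1, π1 s a1 * Q (s, a1, a2) := by
      intro s a2
      simp only [Matrix.mulVec, dotProduct, hBa2, Matrix.of_apply,
        Fintype.sum_prod_type]
      rw [Finset.sum_eq_single s]
      · refine Finset.sum_congr rfl fun a1 _ => ?_
        rw [Finset.sum_eq_single a2]
        · simp
        · intro b _ hb; simp [hb]
        · simp
      · intro b _ hb; simp [hb]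
      · simp
    constructor
    · intro s a1
      rw [← Matrix.mulVec_mulVec, hDr, Matrix.sub_mulVec, Pi.sub_apply, hBa1Q, hBQ]
    · intro s a2
      rw [← Matrix.mulVec_mulVec, hDr, Matrix.sub_mulVec, Pi.sub_apply, hBa2Q, hBQ]
  obtain ⟨m1, m2⟩ := main r1 V1 Q1 hV1 hQ1
  obtain ⟨n1, n2⟩ := main r2 V2 Q2 hV2 hQ2
  constructor
  · rintro ⟨h1, h2, h3, h4⟩
    refine ⟨fun a1 s => ?_, fun a2 s => ?_, fun a1 s => ?_, fun a2 s => ?_⟩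
    · rw [m1 s a1]; exact sub_nonpos.mpr (h2 s a1)
    · rw [n2 s a2]; exact sub_nonpos.mpr (h1 s a2)
    · rw [n1 s a1]; exact sub_nonneg.mpr (h4 s a1)
    · rw [m2 s a2]; exact sub_nonneg.mpr (h3 s a2)
  · rintro ⟨h1, h2, h3, h4⟩
    refine ⟨fun s a2 => ?_, fun s a1 => ?_, fun s a2 => ?_, fun s a1 => ?_⟩
    · have := h2 a2 s; rw [n2 s a2] at this; linarith
    · have := h1 a1 s; rw [m1 s a1] at this; linarith
    · have := h4 a2 s; rw [m2 s a2] at this; linarith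
    · have := h3 a1 s; rw [n1 s a1] at this; linarith
end

section
/- In a two-player finite discounted stochastic game, a bi-policy π is a coordination equilibrium (a Nash equilibrium at which every player additionally attains at each state the maximum of their own Q-function over all pure joint actions) if and only if (B_{π|a_1} − B_π) D_π r_1 ≤ 0 for all a_1 ∈ A_1, (B_{π|a_2} − B_π) D_π r_2 ≤ 0 for all a_2 ∈ A_2, and (B_π − B_a) D_π r_i ≥ 0 for each player i and every pure joint action a ∈ A_1 × A_2. -/
open Matrix BigOperators

/-- In a two-player finite discounted stochastic game, a
bi-policy `π` is a coordination equilibrium (a Nash equilibrium at which every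
player additionally attains at each state the maximum of their own Q-function
over all pure joint actions) if and only if `(B_{π|a_1} − B_π) D_π r_1 ≤ 0` for
all `a_1`, `(B_{π|a_2} − B_π) D_π r_2 ≤ 0` for all `a_2`, and
`(B_π − B_a) D_π r_i ≥ 0` for each player `i` and every pure joint action `a`. -/
theorem stmt6 {S A1 A2 : Type*} [Fintype S] [Fintype A1] [Fintype A2]
    [DecidableEq S] [DecidableEq A1] [DecidableEq A2]
    (γ : ℝ) (hγ0 : 0 ≤ γ) (hγ1 : γ < 1)
    (p : S × A1 × A2 → S → ℝ)
    (hp0 : ∀ sa s', 0 ≤ p sa s') (hp1 : ∀ sa, ∑ s', p sa s' = 1)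
    (π1 : S → A1 → ℝ) (π2 : S → A2 → ℝ)
    (hπ10 : ∀ s a, 0 ≤ π1 s a) (hπ11 : ∀ s, ∑ a, π1 s a = 1)
    (hπ20 : ∀ s a, 0 ≤ π2 s a) (hπ21 : ∀ s, ∑ a, π2 s a = 1)
    (r1 r2 : S × A1 × A2 → ℝ)
    (Gπ : Matrix S S ℝ)
    (hG : Gπ = Matrix.of fun s s' => ∑ a1, ∑ a2, π1 s a1 * π2 s a2 * p (s, a1, a2) s')
    (Bπ : Matrix S (S × A1 × A2) ℝ)
    (hB : Bπ = Matrix.of fun s x => if x.1 = s then π1 s x.2.1 * π2 s x.2.2 else 0)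
    (Bπa1 : A1 → Matrix S (S × A1 × A2) ℝ)
    (hBa1 : ∀ a1, Bπa1 a1 =
      Matrix.of fun s x => if x.1 = s ∧ x.2.1 = a1 then π2 s x.2.2 else 0)
    (Bπa2 : A2 → Matrix S (S × A1 × A2) ℝ)
    (hBa2 : ∀ a2, Bπa2 a2 =
      Matrix.of fun s x => if x.1 = s ∧ x.2.2 = a2 then π1 s x.2.1 else 0)
    (Ba : A1 × A2 → Matrix S (S × A1 × A2) ℝ)
    (hBa : ∀ a, Ba a = Matrix.of fun s x => if x = (s, a.1, a.2) then 1 else 0)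
    (P : Matrix (S × A1 × A2) S ℝ)
    (hP : P = Matrix.of fun sa s' => p sa s')
    (V1 V2 : S → ℝ)
    (hV1 : V1 = (1 - γ • Gπ)⁻¹ *ᵥ (Bπ *ᵥ r1))
    (hV2 : V2 = (1 - γ • Gπ)⁻¹ *ᵥ (Bπ *ᵥ r2))
    (Q1 Q2 : S × A1 × A2 → ℝ)
    (hQ1 : ∀ sa, Q1 sa = r1 sa + γ * ∑ s', p sa s' * V1 s')
    (hQ2 : ∀ sa, Q2 sa = r2 sa + γ * ∑ s', p sa s' * V2 s')
    (Dπ : Matrix (S × A1 × A2) (S × A1 × A2) ℝ)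
    (hD : Dπ = 1 + γ • (P * (1 - γ • Gπ)⁻¹ * Bπ)) :
    ((∀ s : S, ∀ a2 : A2, ∑ a1, π1 s a1 * Q2 (s, a1, a2) ≤ V2 s) ∧
     (∀ s : S, ∀ a1 : A1, ∑ a2, π2 s a2 * Q1 (s, a1, a2) ≤ V1 s) ∧
     (∀ s : S, ∀ a : A1 × A2,
        Q1 (s, a.1, a.2) ≤ ∑ b1, ∑ b2, π1 s b1 * π2 s b2 * Q1 (s, b1, b2)) ∧
     (∀ s : S, ∀ a : A1 × A2,
        Q2 (s, a.1, a.2) ≤ ∑ b1, ∑ b2, π1 s b1 * π2 s b2 * Q2 (s, b1, b2)))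
      ↔
    ((∀ a1 : A1, ∀ s : S, (((Bπa1 a1 - Bπ) * Dπ) *ᵥ r1) s ≤ 0) ∧
     (∀ a2 : A2, ∀ s : S, (((Bπa2 a2 - Bπ) * Dπ) *ᵥ r2) s ≤ 0) ∧
     (∀ a : A1 × A2, ∀ s : S, 0 ≤ (((Bπ - Ba a) * Dπ) *ᵥ r1) s) ∧
     (∀ a : A1 × A2, ∀ s : S, 0 ≤ (((Bπ - Ba a) * Dπ) *ᵥ r2) s)) := by

  -- abbreviation for the matrix 1 - γ•Gπ
  set M : Matrix S S ℝ := 1 - γ • Gπ with hM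
  have hGnn : ∀ s s', 0 ≤ Gπ s s' := by
    intro s s'
    rw [hG]
    exact Finset.sum_nonneg fun a1 _ => Finset.sum_nonneg fun a2 _ =>
      mul_nonneg (mul_nonneg (hπ10 s a1) (hπ20 s a2)) (hp0 _ _)
  have hGrow : ∀ s, ∑ s', Gπ s s' = 1 := by
    intro s
    rw [hG]
    simp only [Matrix.of_apply]
    rw [Finset.sum_comm]
    calc ∑ a1, ∑ s', ∑ a2, π1 s a1 * π2 s a2 * p (s, a1, a2) s'
        = ∑ a1, ∑ a2, ∑ s', π1 s a1 * π2 s a2 * p (s, a1, a2) s' := by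
          exact Finset.sum_congr rfl fun a1 _ => Finset.sum_comm
      _ = ∑ a1, ∑ a2, π1 s a1 * π2 s a2 := by
          refine Finset.sum_congr rfl fun a1 _ => Finset.sum_congr rfl fun a2 _ => ?_
          rw [← Finset.mul_sum, hp1, mul_one]
      _ = 1 := by
          simp [← Finset.mul_sum, hπ21, hπ11]
  have hGle : ∀ s, Gπ s s ≤ 1 := by
    intro s
    rw [← hGrow s]
    exact Finset.single_le_sum (fun s' _ => hGnn s s') (Finset.mem_univ s)
  have hdet : M.det ≠ 0 := by
    apply det_ne_zero_of_sum_row_lt_diag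
    intro k
    have h1 : M k k = 1 - γ * Gπ k k := by simp [hM, Matrix.sub_apply, Matrix.one_apply]
    have h2 : ∀ j, j ≠ k → M k j = -(γ * Gπ k j) := by
      intro j hj
      simp [hM, Matrix.sub_apply, Matrix.one_apply, Ne.symm hj]
    have hsum : ∑ j ∈ Finset.univ.erase k, ‖M k j‖ = γ * (1 - Gπ k k) := by
      have step : ∀ j ∈ Finset.univ.erase k, ‖M k j‖ = γ * Gπ k j := by
        intro j hj
        rw [h2 j (Finset.mem_erase.mp hj).1, Real.norm_eq_abs, abs_neg,
          abs_of_nonneg (mul_nonneg hγ0 (hGnn k j))]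
      rw [Finset.sum_congr rfl step, ← Finset.mul_sum, mul_sub]
      have := Finset.add_sum_erase Finset.univ (fun j => Gπ k j) (Finset.mem_univ k)
      rw [hGrow k] at this
      rw [mul_comm]; nlinarith [this]
    rw [hsum, h1, Real.norm_eq_abs]
    have hle : γ * Gπ k k ≤ γ := by nlinarith [hGle k, hGnn k k]
    rw [abs_of_pos (by linarith)]
    nlinarith [hGnn k k]
  have hunit : IsUnit M.det := isUnit_iff_ne_zero.mpr hdet
  -- Bellman fixed point equations
  have hMV1 : M *ᵥ V1 = Bπ *ᵥ r1 := by
    rw [hV1, Matrix.mulVec_mulVec, Matrix.mul_nonsing_inv M hunit, Matrix.one_mulVec]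
  have hMV2 : M *ᵥ V2 = Bπ *ᵥ r2 := by
    rw [hV2, Matrix.mulVec_mulVec, Matrix.mul_nonsing_inv M hunit, Matrix.one_mulVec]
  -- componentwise mulVec formulas
  have lemB : ∀ (f : S × A1 × A2 → ℝ) (s : S),
      (Bπ *ᵥ f) s = ∑ a1, ∑ a2, π1 s a1 * π2 s a2 * f (s, a1, a2) := by
    intro f s
    simp [hB, Matrix.mulVec, dotProduct, Fintype.sum_prod_type, ite_mul]
  have lemB1 : ∀ (f : S × A1 × A2 → ℝ) (a1 : A1) (s : S),
      (Bπa1 a1 *ᵥ f) s = ∑ a2, π2 s a2 * f (s, a1, a2) := by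
    intro f a1 s
    simp [hBa1, Matrix.mulVec, dotProduct, Fintype.sum_prod_type, ite_mul, ite_and,
      Finset.sum_ite_eq']
  have lemB2 : ∀ (f : S × A1 × A2 → ℝ) (a2 : A2) (s : S),
      (Bπa2 a2 *ᵥ f) s = ∑ a1, π1 s a1 * f (s, a1, a2) := by
    intro f a2 s
    simp [hBa2, Matrix.mulVec, dotProduct, Fintype.sum_prod_type, ite_mul, ite_and,
      Finset.sum_ite_eq']
  have lemBa : ∀ (f : S × A1 × A2 → ℝ) (a : A1 × A2) (s : S),
      (Ba a *ᵥ f) s = f (s, a.1, a.2) := by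
    intro f a s
    simp [hBa, Matrix.mulVec, dotProduct, Fintype.sum_prod_type, ite_mul, Prod.ext_iff,
      ite_and, Finset.sum_ite_eq']
  have lemG : ∀ (v : S → ℝ) (s : S),
      (Gπ *ᵥ v) s = ∑ s', (∑ a1, ∑ a2, π1 s a1 * π2 s a2 * p (s, a1, a2) s') * v s' := by
    intro v s
    simp [hG, Matrix.mulVec, dotProduct]
  -- D_π r_i = Q_i
  have lemP : ∀ (v : S → ℝ) (sa : S × A1 × A2),
      (P *ᵥ v) sa = ∑ s', p sa s' * v s' := by
    intro v sa
    simp [hP, Matrix.mulVec, dotProduct]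
  have hDQ1 : Dπ *ᵥ r1 = Q1 := by
    funext sa
    rw [hD, Matrix.add_mulVec, Matrix.one_mulVec, Matrix.smul_mulVec]
    have : (P * (1 - γ • Gπ)⁻¹ * Bπ) *ᵥ r1 = P *ᵥ V1 := by
      rw [hV1, Matrix.mulVec_mulVec, Matrix.mulVec_mulVec]
    rw [this]
    simp [hQ1, lemP, Pi.smul_apply]
  have hDQ2 : Dπ *ᵥ r2 = Q2 := by
    funext sa
    rw [hD, Matrix.add_mulVec, Matrix.one_mulVec, Matrix.smul_mulVec]
    have : (P * (1 - γ • Gπ)⁻¹ * Bπ) *ᵥ r2 = P *ᵥ V2 := by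
      rw [hV2, Matrix.mulVec_mulVec, Matrix.mulVec_mulVec]
    rw [this]
    simp [hQ2, lemP, Pi.smul_apply]
  -- V_i s = expected Q_i under π
  have hBell : ∀ (V : S → ℝ) (r Q : S × A1 × A2 → ℝ),
      (M *ᵥ V = Bπ *ᵥ r) → (∀ sa, Q sa = r sa + γ * ∑ s', p sa s' * V s') →
      ∀ s, ∑ b1, ∑ b2, π1 s b1 * π2 s b2 * Q (s, b1, b2) = V s := by
    intro V r Q hMV hQ s
    have h0 := congrFun hMV s
    have h1 : (M *ᵥ V) s = V s - γ * (Gπ *ᵥ V) s := by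
      simp [hM, Matrix.sub_mulVec, Matrix.one_mulVec, Matrix.smul_mulVec]
    rw [h1] at h0
    have h2 : ∑ b1, ∑ b2, π1 s b1 * π2 s b2 * Q (s, b1, b2)
        = (Bπ *ᵥ r) s + γ * (Gπ *ᵥ V) s := by
      rw [lemB, lemG]
      simp only [hQ, mul_add, Finset.sum_add_distrib]
      congr 1
      calc ∑ b1, ∑ b2, π1 s b1 * π2 s b2 * (γ * ∑ s', p (s, b1, b2) s' * V s')
          = ∑ b1, ∑ b2, ∑ s', γ * (π1 s b1 * π2 s b2 * p (s, b1, b2) s' * V s') := by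
            refine Finset.sum_congr rfl fun b1 _ => Finset.sum_congr rfl fun b2 _ => ?_
            simp only [Finset.mul_sum]
            exact Finset.sum_congr rfl fun s' _ => by ring
        _ = ∑ b1, ∑ s', ∑ b2, γ * (π1 s b1 * π2 s b2 * p (s, b1, b2) s' * V s') :=
            Finset.sum_congr rfl fun b1 _ => Finset.sum_comm
        _ = ∑ s', ∑ b1, ∑ b2, γ * (π1 s b1 * π2 s b2 * p (s, b1, b2) s' * V s') :=
            Finset.sum_comm
        _ = γ * ∑ s', (∑ a1, ∑ a2, π1 s a1 * π2 s a2 * p (s, a1, a2) s') * V s' := by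
            rw [Finset.mul_sum]
            refine Finset.sum_congr rfl fun s' _ => ?_
            simp only [Finset.sum_mul, Finset.mul_sum]
    rw [h2]
    linarith
  have hBell1 := hBell V1 r1 Q1 hMV1 hQ1
  have hBell2 := hBell V2 r2 Q2 hMV2 hQ2
  -- rewrite the RHS quantities
  have e1 : ∀ (a1 : A1) (s : S),
      (((Bπa1 a1 - Bπ) * Dπ) *ᵥ r1) s = (∑ a2, π2 s a2 * Q1 (s, a1, a2)) - V1 s := by
    intro a1 s
    rw [← Matrix.mulVec_mulVec, hDQ1, Matrix.sub_mulVec]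
    simp [lemB1, lemB, hBell1 s]
  have e2 : ∀ (a2 : A2) (s : S),
      (((Bπa2 a2 - Bπ) * Dπ) *ᵥ r2) s = (∑ a1, π1 s a1 * Q2 (s, a1, a2)) - V2 s := by
    intro a2 s
    rw [← Matrix.mulVec_mulVec, hDQ2, Matrix.sub_mulVec]
    simp [lemB2, lemB, hBell2 s]
  have e3 : ∀ (a : A1 × A2) (s : S),
      ((( Bπ - Ba a) * Dπ) *ᵥ r1) s = V1 s - Q1 (s, a.1, a.2) := by
    intro a s
    rw [← Matrix.mulVec_mulVec, hDQ1, Matrix.sub_mulVec]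
    simp [lemBa, lemB, hBell1 s]
  have e4 : ∀ (a : A1 × A2) (s : S),
      ((( Bπ - Ba a) * Dπ) *ᵥ r2) s = V2 s - Q2 (s, a.1, a.2) := by
    intro a s
    rw [← Matrix.mulVec_mulVec, hDQ2, Matrix.sub_mulVec]
    simp [lemBa, lemB, hBell2 s]
  constructor
  · rintro ⟨hA, hB', hC, hD'⟩
    refine ⟨fun a1 s => ?_, fun a2 s => ?_, fun a s => ?_, fun a s => ?_⟩
    · rw [e1]; linarith [hB' s a1]
    · rw [e2]; linarith [hA s a2]
    · rw [e3]; linarith [hC s a, hBell1 s]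
    · rw [e4]; linarith [hD' s a, hBell2 s]
  · rintro ⟨hA, hB', hC, hD'⟩
    refine ⟨fun s a2 => ?_, fun s a1 => ?_, fun s a => ?_, fun s a => ?_⟩
    · have := hB' a2 s; rw [e2] at this; linarith
    · have := hA a1 s; rw [e1] at this; linarith
    · have := hC a s; rw [e3] at this; rw [hBell1 s]; linarith
    · have := hD' a s; rw [e4] at this; rw [hBell2 s]; linarith
end

section
/- In a two-player finite discounted stochastic game, a bi-policy π is a correlated equilibrium (its per-state joint distribution is a correlated equilibrium of the Q-value game at every state) if and only if for each player i, each state s, each action a_i with positive marginal probability, and each alternative action ǎ_i ≠ a_i: π⃗^T H(s,a_i)^T [H(s,a_i) − H(s,ǎ_i)] D_π r_i ≥ 0, where π⃗ is the bi-policy arranged as a vector of joint probabilities, and H(s,a_i) is the linear operator extracting the slice of a reward vector corresponding to state s and player i's action fixed to a_i. -/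
open Matrix BigOperators

/-- In a two-player finite discounted stochastic game, a
(joint) bi-policy `π` is a correlated equilibrium (its per-state joint
distribution is a correlated equilibrium of the Q-value game at every state)
if and only if for each player `i`, each state `s`, each action `a_i` with
positive marginal probability, and each alternative `ǎ_i ≠ a_i`:
`π⃗ᵀ H(s,a_i)ᵀ [H(s,a_i) − H(s,ǎ_i)] D_π r_i ≥ 0`. -/
theorem stmt8 {S A1 A2 : Type*} [Fintype S] [Fintype A1] [Fintype A2]
    [DecidableEq S] [DecidableEq A1] [DecidableEq A2]
    (γ : ℝ) (hγ0 : 0 ≤ γ) (hγ1 : γ < 1)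
    (p : S × A1 × A2 → S → ℝ)
    (hp0 : ∀ sa s', 0 ≤ p sa s') (hp1 : ∀ sa, ∑ s', p sa s' = 1)
    (π : S → A1 × A2 → ℝ)
    (hπ0 : ∀ s a, 0 ≤ π s a) (hπ1 : ∀ s, ∑ a, π s a = 1)
    (r1 r2 : S × A1 × A2 → ℝ)
    (Gπ : Matrix S S ℝ)
    (hG : Gπ = Matrix.of fun s s' => ∑ a : A1 × A2, π s a * p (s, a) s')
    (Bπ : Matrix S (S × A1 × A2) ℝ)
    (hB : Bπ = Matrix.of fun s x => if x.1 = s then π s x.2 else 0)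
    (vecπ : S × A1 × A2 → ℝ)
    (hvec : vecπ = fun x => π x.1 x.2)
    (H1 : S → A1 → Matrix A2 (S × A1 × A2) ℝ)
    (hH1 : ∀ s a1, H1 s a1 = Matrix.of fun a2 x => if x = (s, a1, a2) then 1 else 0)
    (H2 : S → A2 → Matrix A1 (S × A1 × A2) ℝ)
    (hH2 : ∀ s a2, H2 s a2 = Matrix.of fun a1 x => if x = (s, a1, a2) then 1 else 0)
    (P : Matrix (S × A1 × A2) S ℝ)
    (hP : P = Matrix.of fun sa s' => p sa s')
    (V1 V2 : S → ℝ)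
    (hV1 : V1 = (1 - γ • Gπ)⁻¹ *ᵥ (Bπ *ᵥ r1))
    (hV2 : V2 = (1 - γ • Gπ)⁻¹ *ᵥ (Bπ *ᵥ r2))
    (Q1 Q2 : S × A1 × A2 → ℝ)
    (hQ1 : ∀ sa, Q1 sa = r1 sa + γ * ∑ s', p sa s' * V1 s')
    (hQ2 : ∀ sa, Q2 sa = r2 sa + γ * ∑ s', p sa s' * V2 s')
    (Dπ : Matrix (S × A1 × A2) (S × A1 × A2) ℝ)
    (hD : Dπ = 1 + γ • (P * (1 - γ • Gπ)⁻¹ * Bπ)) :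
    ((∀ s : S, ∀ a1 : A1, (0 < ∑ a2, π s (a1, a2)) → ∀ b1 : A1, b1 ≠ a1 →
        ∑ a2, π s (a1, a2) * Q1 (s, b1, a2) ≤ ∑ a2, π s (a1, a2) * Q1 (s, a1, a2)) ∧
     (∀ s : S, ∀ a2 : A2, (0 < ∑ a1, π s (a1, a2)) → ∀ b2 : A2, b2 ≠ a2 →
        ∑ a1, π s (a1, a2) * Q2 (s, a1, b2) ≤ ∑ a1, π s (a1, a2) * Q2 (s, a1, a2)))
      ↔
    ((∀ s : S, ∀ a1 : A1, (0 < ∑ a2, π s (a1, a2)) → ∀ b1 : A1, b1 ≠ a1 →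
        0 ≤ (vecπ ᵥ* (H1 s a1)ᵀ) ⬝ᵥ (((H1 s a1 - H1 s b1) * Dπ) *ᵥ r1)) ∧
     (∀ s : S, ∀ a2 : A2, (0 < ∑ a1, π s (a1, a2)) → ∀ b2 : A2, b2 ≠ a2 →
        0 ≤ (vecπ ᵥ* (H2 s a2)ᵀ) ⬝ᵥ (((H2 s a2 - H2 s b2) * Dπ) *ᵥ r2))) := by

  have hQD1 : Dπ *ᵥ r1 = Q1 := by
    funext sa
    rw [hD, Matrix.add_mulVec, Matrix.one_mulVec, Matrix.smul_mulVec,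
      ← Matrix.mulVec_mulVec, ← Matrix.mulVec_mulVec, ← hV1, hQ1]
    simp [hP, Matrix.mulVec, dotProduct, Finset.mul_sum]
  have hQD2 : Dπ *ᵥ r2 = Q2 := by
    funext sa
    rw [hD, Matrix.add_mulVec, Matrix.one_mulVec, Matrix.smul_mulVec,
      ← Matrix.mulVec_mulVec, ← Matrix.mulVec_mulVec, ← hV2, hQ2]
    simp [hP, Matrix.mulVec, dotProduct, Finset.mul_sum]
  have key1 : ∀ (s : S) (a1 b1 : A1),
      (vecπ ᵥ* (H1 s a1)ᵀ) ⬝ᵥ (((H1 s a1 - H1 s b1) * Dπ) *ᵥ r1)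
        = ∑ a2, π s (a1, a2) * (Q1 (s, a1, a2) - Q1 (s, b1, a2)) := by
    intro s a1 b1
    rw [← Matrix.mulVec_mulVec, hQD1]
    simp [dotProduct, Matrix.vecMul, Matrix.mulVec, Matrix.sub_apply, hH1, hvec,
      sub_mul, mul_sub, Finset.sum_sub_distrib, mul_ite, mul_one, mul_zero,
      Finset.sum_ite_eq, Finset.sum_ite_eq', mul_comm]
  have key2 : ∀ (s : S) (a2 b2 : A2),
      (vecπ ᵥ* (H2 s a2)ᵀ) ⬝ᵥ (((H2 s a2 - H2 s b2) * Dπ) *ᵥ r2)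
        = ∑ a1, π s (a1, a2) * (Q2 (s, a1, a2) - Q2 (s, a1, b2)) := by
    intro s a2 b2
    rw [← Matrix.mulVec_mulVec, hQD2]
    simp [dotProduct, Matrix.vecMul, Matrix.mulVec, Matrix.sub_apply, hH2, hvec,
      sub_mul, mul_sub, Finset.sum_sub_distrib, mul_ite, mul_one, mul_zero,
      Finset.sum_ite_eq, Finset.sum_ite_eq', mul_comm]
  constructor
  · rintro ⟨h1, h2⟩
    constructor
    · intro s a1 hpos b1 hb
      rw [key1 s a1 b1]
      have := h1 s a1 hpos b1 hb
      simp only [mul_sub]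
      rw [Finset.sum_sub_distrib]
      linarith
    · intro s a2 hpos b2 hb
      rw [key2 s a2 b2]
      have := h2 s a2 hpos b2 hb
      simp only [mul_sub]
      rw [Finset.sum_sub_distrib]
      linarith
  · rintro ⟨h1, h2⟩
    constructor
    · intro s a1 hpos b1 hb
      have := h1 s a1 hpos b1 hb
      rw [key1 s a1 b1] at this
      simp only [mul_sub] at this
      rw [Finset.sum_sub_distrib] at this
      linarith
    · intro s a2 hpos b2 hb
      have := h2 s a2 hpos b2 hb
      rw [key2 s a2 b2] at this
      simp only [mul_sub] at this
      rw [Finset.sum_sub_distrib] at this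
      linarith
end

section
/- In a finite two-player game, if an adversarial equilibrium exists — a mixed profile (π_1, π_2) that is a Nash equilibrium and additionally satisfies E_{π}[R_i] ≤ E[R_i(π_i, a_{−i})] for each player i and every pure action a_{−i} of the opponent — then the equilibrium payoff of each player equals their maximin value: E_π[R_i] = max_{σ_i} min_{a_{−i}} E[R_i(σ_i, a_{−i})]. Consequently all adversarial equilibria yield the same payoff vector. -/
open BigOperators

noncomputable section

variable {A1 A2 : Type*} [Fintype A1] [Fintype A2]

/-- Expected payoff of a payoff function `R` under the mixed profile `(π1, π2)`. -/
def expPay (R : A1 → A2 → ℝ) (π1 : A1 → ℝ) (π2 : A2 → ℝ) : ℝ :=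
  ∑ a1, ∑ a2, π1 a1 * π2 a2 * R a1 a2

/-- `σ` is a mixed strategy. -/
def IsMixed {A : Type*} [Fintype A] (σ : A → ℝ) : Prop :=
  (∀ a, 0 ≤ σ a) ∧ ∑ a, σ a = 1

/-- Adversarial equilibrium: a Nash equilibrium at which additionally each
player's expected payoff is a lower bound over all pure opponent deviations. -/
def IsAdvE (R1 R2 : A1 → A2 → ℝ) (π1 : A1 → ℝ) (π2 : A2 → ℝ) : Prop :=
  IsMixed π1 ∧ IsMixed π2 ∧
  (∀ σ1 : A1 → ℝ, IsMixed σ1 → expPay R1 σ1 π2 ≤ expPay R1 π1 π2) ∧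
  (∀ σ2 : A2 → ℝ, IsMixed σ2 → expPay R2 π1 σ2 ≤ expPay R2 π1 π2) ∧
  (∀ a2 : A2, expPay R1 π1 π2 ≤ ∑ a1, π1 a1 * R1 a1 a2) ∧
  (∀ a1 : A1, expPay R2 π1 π2 ≤ ∑ a2, π2 a2 * R2 a1 a2)

/-- The set of values player 1 can guarantee: worst-case (over pure opponent
actions) expected payoffs of mixed strategies `σ1`. -/
def guarantee1 [Nonempty A2] (R1 : A1 → A2 → ℝ) : Set ℝ :=
  {x | ∃ σ1 : A1 → ℝ, IsMixed σ1 ∧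
    x = Finset.univ.inf' Finset.univ_nonempty (fun a2 => ∑ a1, σ1 a1 * R1 a1 a2)}

def guarantee2 [Nonempty A1] (R2 : A1 → A2 → ℝ) : Set ℝ :=
  {x | ∃ σ2 : A2 → ℝ, IsMixed σ2 ∧
    x = Finset.univ.inf' Finset.univ_nonempty (fun a1 => ∑ a2, σ2 a2 * R2 a1 a2)}

/-- If an adversarial equilibrium exists in a finite
two-player game, then the equilibrium payoff of each player equals (is the
greatest element of the guaranteeable values, i.e. the maximin value of) their
maximin value; consequently all adversarial equilibria yield the same payoff
vector. -/
theorem stmt15 [Nonempty A1] [Nonempty A2]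
    (R1 R2 : A1 → A2 → ℝ)
    (π1 : A1 → ℝ) (π2 : A2 → ℝ) (h : IsAdvE R1 R2 π1 π2) :
    (IsGreatest (guarantee1 R1) (expPay R1 π1 π2) ∧
     IsGreatest (guarantee2 R2) (expPay R2 π1 π2)) ∧
    (∀ ρ1 : A1 → ℝ, ∀ ρ2 : A2 → ℝ, IsAdvE R1 R2 ρ1 ρ2 →
      expPay R1 ρ1 ρ2 = expPay R1 π1 π2 ∧ expPay R2 ρ1 ρ2 = expPay R2 π1 π2) := by
  have key : ∀ (ρ1 : A1 → ℝ) (ρ2 : A2 → ℝ), IsAdvE R1 R2 ρ1 ρ2 →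
      IsGreatest (guarantee1 R1) (expPay R1 ρ1 ρ2) ∧
      IsGreatest (guarantee2 R2) (expPay R2 ρ1 ρ2) := by
    intro ρ1 ρ2 ⟨hm1, hm2, hN1, hN2, hA1, hA2⟩
    have e1 : ∀ σ1 : A1 → ℝ,
        expPay R1 σ1 ρ2 = ∑ a2, ρ2 a2 * ∑ a1, σ1 a1 * R1 a1 a2 := by
      intro σ1
      rw [expPay, Finset.sum_comm]
      simp only [Finset.mul_sum]
      exact Finset.sum_congr rfl fun _ _ => Finset.sum_congr rfl fun _ _ => by ring
    have e2 : ∀ σ2 : A2 → ℝ,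
        expPay R2 ρ1 σ2 = ∑ a1, ρ1 a1 * ∑ a2, σ2 a2 * R2 a1 a2 := by
      intro σ2
      rw [expPay]
      simp only [Finset.mul_sum]
      exact Finset.sum_congr rfl fun _ _ => Finset.sum_congr rfl fun _ _ => by ring
    have conv1 : ∀ f : A2 → ℝ,
        Finset.univ.inf' Finset.univ_nonempty f ≤ ∑ a2, ρ2 a2 * f a2 := by
      intro f
      calc Finset.univ.inf' Finset.univ_nonempty f
          = ∑ a2, ρ2 a2 * Finset.univ.inf' Finset.univ_nonempty f := by
            rw [← Finset.sum_mul, hm2.2, one_mul]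
        _ ≤ ∑ a2, ρ2 a2 * f a2 := by
            apply Finset.sum_le_sum
            intro a2 _
            exact mul_le_mul_of_nonneg_left
              (Finset.inf'_le f (Finset.mem_univ a2)) (hm2.1 a2)
    have conv2 : ∀ f : A1 → ℝ,
        Finset.univ.inf' Finset.univ_nonempty f ≤ ∑ a1, ρ1 a1 * f a1 := by
      intro f
      calc Finset.univ.inf' Finset.univ_nonempty f
          = ∑ a1, ρ1 a1 * Finset.univ.inf' Finset.univ_nonempty f := by
            rw [← Finset.sum_mul, hm1.2, one_mul]
        _ ≤ ∑ a1, ρ1 a1 * f a1 := by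
            apply Finset.sum_le_sum
            intro a1 _
            exact mul_le_mul_of_nonneg_left
              (Finset.inf'_le f (Finset.mem_univ a1)) (hm1.1 a1)
    constructor
    · constructor
      · refine ⟨ρ1, hm1, le_antisymm ?_ ?_⟩
        · exact Finset.le_inf' _ _ fun a2 _ => hA1 a2
        · exact le_trans (conv1 _) (le_of_eq (e1 ρ1).symm)
      · rintro x ⟨σ1, hσ1, rfl⟩
        exact le_trans (le_trans (conv1 _) (le_of_eq (e1 σ1).symm)) (hN1 σ1 hσ1)
    · constructor
      · refine ⟨ρ2, hm2, le_antisymm ?_ ?_⟩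
        · exact Finset.le_inf' _ _ fun a1 _ => hA2 a1
        · exact le_trans (conv2 _) (le_of_eq (e2 ρ2).symm)
      · rintro x ⟨σ2, hσ2, rfl⟩
        exact le_trans (le_trans (conv2 _) (le_of_eq (e2 σ2).symm)) (hN2 σ2 hσ2)
  refine ⟨key π1 π2 h, fun ρ1 ρ2 hρ => ?_⟩
  obtain ⟨g1, g2⟩ := key ρ1 ρ2 hρ
  obtain ⟨g1', g2'⟩ := key π1 π2 h
  exact ⟨g1.unique g1', g2.unique g2'⟩
end
end
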